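/- Let E₁, …, E_m be a system of word equations on n unknowns, let L ∈ ℕ^n, and let q_{ij} = Q_{E_i, x_j, L} for 1 ≤ i ≤ m, 1 ≤ j ≤ n. If the system has a common solution of rank r and length type L, then the rank of the m × n matrix (q_{ij}), viewed over the field ℚ(X) of rational functions, is at most n − r. -/

import Mathlib

open Polynomial

/-- The characteristic polynomial `P(w)` of a word. -/
noncomputable def wordPoly (w : List ℕ) : Polynomial ℤ :=
  ∑ i ∈ Finset.range w.length, Polynomial.C (w.getD i 0 : ℤ) * Polynomial.X ^ i

/-- Application of a morphism (given by the images of the unknowns) to a word. -/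
def mApply {n : ℕ} {β : Type*} (h : Fin n → List β) (w : List (Fin n)) : List β :=
  (w.map h).flatten

/-- The morphism maps every unknown to a word over the alphabet `A`. -/
def IntoAlph {n : ℕ} (A : Finset ℕ) (h : Fin n → List ℕ) : Prop :=
  ∀ i, ∀ a ∈ h i, a ∈ A

/-- `w` is a product of words from `A`. -/
def InStar (A : Finset (List ℕ)) (w : List ℕ) : Prop :=
  ∃ l : List (List ℕ), (∀ u ∈ l, u ∈ A) ∧ l.flatten = w

/-- The combinatorial rank of a morphism: the smallest `r` such that there is a set of
`r` words whose products contain all images of the unknowns. -/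
noncomputable def mRank {n : ℕ} (h : Fin n → List ℕ) : ℕ :=
  sInf {r | ∃ A : Finset (List ℕ), A.card = r ∧ ∀ i, InStar A (h i)}

/-- The length type of a morphism, as a rational vector. -/
def lenQ {n : ℕ} (h : Fin n → List ℕ) : Fin n → ℚ :=
  fun i => ((h i).length : ℚ)

/-- `|w|_L`: the length of the image of `w` under any morphism of length type `L`. -/
def lenL {n : ℕ} (L : Fin n → ℕ) (w : List (Fin n)) : ℕ :=
  (w.map L).sum

/-- The polynomial `Q_{E,x,L}` for the word equation `u = v`, the unknown `x` and the
length type `L`. -/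
noncomputable def eqPoly {n : ℕ} (u v : List (Fin n)) (x : Fin n) (L : Fin n → ℕ) :
    Polynomial ℤ :=
  (∑ i ∈ Finset.range u.length,
      if u.getD i x = x then (Polynomial.X : Polynomial ℤ) ^ lenL L (u.take i) else 0)
    - ∑ i ∈ Finset.range v.length,
      if v.getD i x = x then (Polynomial.X : Polynomial ℤ) ^ lenL L (v.take i) else 0

/-- Embedding of `ℤ[X]` into the field `ℚ(X)` of rational functions. -/
noncomputable def toRF (p : Polynomial ℤ) : RatFunc ℚ :=
  algebraMap (Polynomial ℚ) (RatFunc ℚ) (p.map (Int.castRingHom ℚ))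

/-- A stable submonoid of the free monoid of words. -/
def Stable (M : Set (List ℕ)) : Prop :=
  [] ∈ M ∧ (∀ u ∈ M, ∀ v ∈ M, u ++ v ∈ M) ∧
    ∀ p u q : List ℕ, p ∈ M → q ∈ M → p ++ u ∈ M → u ++ q ∈ M → u ∈ M

/-- The free hull of the set of images of a morphism. -/
def hull {n : ℕ} (h : Fin n → List ℕ) : Set (List ℕ) :=
  ⋂₀ {M | Stable M ∧ ∀ i, h i ∈ M}

/-- The base (code) of the free hull: indecomposable nonempty elements. -/
def base {n : ℕ} (h : Fin n → List ℕ) : Set (List ℕ) :=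
  {m | m ∈ hull h ∧ m ≠ [] ∧
    ¬ ∃ u v : List ℕ, u ∈ hull h ∧ v ∈ hull h ∧ u ≠ [] ∧ v ≠ [] ∧ u ++ v = m}

variable {n : ℕ} {h : Fin n → List ℕ}

theorem hull_stable : Stable (hull h) := by
  refine ⟨fun M hM => hM.1.1, fun u hu v hv M hM => hM.1.2.1 u (hu M hM) v (hv M hM),
    fun p u q hp hq hpu huq M hM => hM.1.2.2 p u q (hp M hM) (hq M hM) (hpu M hM) (huq M hM)⟩

theorem mem_hull_self (i : Fin n) : h i ∈ hull h := fun _M hM => hM.2 i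

theorem base_subset_hull : base h ⊆ hull h := fun _ hb => hb.1

theorem flatten_mem_hull {l : List (List ℕ)} (hl : ∀ u ∈ l, u ∈ hull h) :
    l.flatten ∈ hull h := by
  induction l with
  | nil => exact hull_stable.1
  | cons a t ih =>
    exact hull_stable.2.1 a (hl a (by simp)) t.flatten (ih fun u hu => hl u (by simp [hu]))

theorem flatten_base_nil {l : List (List ℕ)} (hl : ∀ u ∈ l, u ∈ base h)
    (hf : l.flatten = []) : l = [] := by
  cases l with
  | nil => rfl
  | cons a t =>
    exfalso
    exact (hl a (by simp)).2.1 (List.append_eq_nil_iff.mp hf).1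

/-- Existence of factorizations over the base. -/
theorem exists_fact_aux : ∀ N m, m ∈ hull h → m.length ≤ N →
    ∃ l : List (List ℕ), (∀ u ∈ l, u ∈ base h) ∧ l.flatten = m := by
  intro N
  induction N with
  | zero =>
    intro m _ hlen
    have : m = [] := List.length_eq_zero_iff.mp (Nat.le_zero.mp hlen)
    exact ⟨[], by simp, by simp [this]⟩
  | succ N ih =>
    intro m hm hlen
    by_cases hnil : m = []
    · exact ⟨[], by simp, by simp [hnil]⟩
    by_cases hbase : m ∈ base h
    · exact ⟨[m], by simp [hbase], by simp⟩
    · have : ∃ u v : List ℕ, u ∈ hull h ∧ v ∈ hull h ∧ u ≠ [] ∧ v ≠ [] ∧ u ++ v = m := by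
        by_contra hc
        exact hbase ⟨hm, hnil, hc⟩
      obtain ⟨u, v, hu, hv, hun, hvn, huv⟩ := this
      have hul : 1 ≤ u.length := List.length_pos_iff.mpr hun
      have hvl : 1 ≤ v.length := List.length_pos_iff.mpr hvn
      have hlm : u.length + v.length = m.length := by rw [← huv]; simp
      obtain ⟨lu, hlu, hluf⟩ := ih u hu (by omega)
      obtain ⟨lv, hlv, hlvf⟩ := ih v hv (by omega)
      refine ⟨lu ++ lv, ?_, by simp [hluf, hlvf, huv]⟩
      intro w hw
      rcases List.mem_append.mp hw with hw | hw
      exacts [hlu w hw, hlv w hw]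

theorem exists_fact {m : List ℕ} (hm : m ∈ hull h) :
    ∃ l : List (List ℕ), (∀ u ∈ l, u ∈ base h) ∧ l.flatten = m :=
  exists_fact_aux m.length m hm le_rfl

/-- Uniqueness of factorizations over the base. -/
theorem fact_unique_aux : ∀ N (l1 l2 : List (List ℕ)), (∀ u ∈ l1, u ∈ base h) →
    (∀ u ∈ l2, u ∈ base h) → l1.flatten = l2.flatten → l1.flatten.length ≤ N → l1 = l2 := by
  intro N
  induction N with
  | zero =>
    intro l1 l2 h1 h2 hf hlen
    have e1 : l1.flatten = [] := List.length_eq_zero_iff.mp (Nat.le_zero.mp hlen)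
    have e2 : l2.flatten = [] := by rw [← hf]; exact e1
    rw [flatten_base_nil h1 e1, flatten_base_nil h2 e2]
  | succ N ih =>
    intro l1 l2 h1 h2 hf hlen
    cases l1 with
    | nil =>
      cases l2 with
      | nil => rfl
      | cons c t2 =>
        exfalso
        exact (h2 c (by simp)).2.1 (by simpa using hf.symm : c = [] ∧ ∀ l ∈ t2, l = []).1
    | cons a t1 =>
      cases l2 with
      | nil =>
        exfalso
        exact (h1 a (by simp)).2.1 (by simpa using hf : a = [] ∧ ∀ l ∈ t1, l = []).1
      | cons c t2 =>
        have ha : a ∈ base h := h1 a (by simp)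
        have hc : c ∈ base h := h2 c (by simp)
        have heq : a ++ t1.flatten = c ++ t2.flatten := by simpa using hf
        have hac : a = c := by
          rcases List.append_eq_append_iff.mp heq with ⟨u, hcu, _⟩ | ⟨u, hau, hto⟩
          · by_cases hu : u = []
            · simp [hcu, hu]
            · exfalso
              have hu_hull : u ∈ hull h := by
                refine hull_stable.2.2 a u t2.flatten ha.1
                  (flatten_mem_hull fun w hw => (h2 w (by simp [hw])).1) ?_ ?_
                · rw [← hcu]; exact hc.1
                · have : t1.flatten = u ++ t2.flatten := by
                    have := heq
                    rw [hcu, List.append_assoc] at this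
                    exact List.append_cancel_left this
                  rw [← this]
                  exact flatten_mem_hull fun w hw => (h1 w (by simp [hw])).1
              exact hc.2.2 ⟨a, u, ha.1, hu_hull, ha.2.1, hu, hcu.symm⟩
          · by_cases hu : u = []
            · simp [hau, hu]
            · exfalso
              have hu_hull : u ∈ hull h := by
                refine hull_stable.2.2 c u t1.flatten hc.1
                  (flatten_mem_hull fun w hw => (h1 w (by simp [hw])).1) ?_ ?_
                · rw [← hau]; exact ha.1
                · rw [← hto]
                  exact flatten_mem_hull fun w hw => (h2 w (by simp [hw])).1
              exact ha.2.2 ⟨c, u, hc.1, hu_hull, hc.2.1, hu, hau.symm⟩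
        subst hac
        have htf : t1.flatten = t2.flatten := List.append_cancel_left heq
        have : t1 = t2 := by
          refine ih t1 t2 (fun w hw => h1 w (by simp [hw])) (fun w hw => h2 w (by simp [hw])) htf ?_
          have hal : 1 ≤ a.length := List.length_pos_iff.mpr ha.2.1
          have : (a :: t1).flatten.length = a.length + t1.flatten.length := by simp
          omega
        rw [this]

theorem fact_unique {l1 l2 : List (List ℕ)} (h1 : ∀ u ∈ l1, u ∈ base h)
    (h2 : ∀ u ∈ l2, u ∈ base h) (hf : l1.flatten = l2.flatten) : l1 = l2 :=
  fact_unique_aux l1.flatten.length l1 l2 h1 h2 hf le_rfl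

/-- Every base element is the head of the factorization of some image. -/
theorem exists_head {b : List ℕ} (hb : b ∈ base h) :
    ∃ (i : Fin n) (l : List (List ℕ)), (∀ u ∈ l, u ∈ base h) ∧ l.flatten = h i ∧
      l.head? = some b := by
  by_contra hcon
  push_neg at hcon
  set M' : Set (List ℕ) :=
    {m | ∃ l : List (List ℕ), (∀ u ∈ l, u ∈ base h) ∧ l.flatten = m ∧ l.head? ≠ some b}
    with hM'
  have hM'hull : M' ⊆ hull h := by
    rintro m ⟨l, hl, hfl, _⟩
    rw [← hfl]
    exact flatten_mem_hull fun u hu => (hl u hu).1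
  have hstable : Stable M' := by
    refine ⟨?_, ?_, ?_⟩
    · show ∃ l : List (List ℕ), (∀ u ∈ l, u ∈ base h) ∧ l.flatten = [] ∧ l.head? ≠ some b
      exact ⟨[], by simp, by simp, by simp⟩
    · rintro u ⟨lu, hlu, hflu, hhu⟩ v ⟨lv, hlv, hflv, hhv⟩
      by_cases hun : u = []
      · have : lu = [] := flatten_base_nil hlu (by rw [hflu, hun])
        exact ⟨lv, hlv, by simp [hflv, hun], hhv⟩
      · refine ⟨lu ++ lv, ?_, by simp [hflu, hflv], ?_⟩
        · intro w hw
          rcases List.mem_append.mp hw with hw | hw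
          exacts [hlu w hw, hlv w hw]
        · have hlune : lu ≠ [] := by
            intro hh; rw [hh] at hflu; exact hun (by simpa using hflu.symm)
          rw [List.head?_append_of_ne_nil _ hlune]
          exact hhu
    · intro p u q hp hq hpu huq
      have hu_hull : u ∈ hull h :=
        hull_stable.2.2 p u q (hM'hull hp) (hM'hull hq) (hM'hull hpu) (hM'hull huq)
      by_cases hun : u = []
      · exact ⟨[], by simp, by simp [hun], by simp⟩
      obtain ⟨lu, hlu, hflu⟩ := exists_fact hu_hull
      obtain ⟨lq, hlq, hflq, _⟩ := hq
      obtain ⟨l', hl', hfl', hh'⟩ := huq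
      have : l' = lu ++ lq := by
        refine fact_unique hl' ?_ (by simp [hfl', hflu, hflq])
        intro w hw
        rcases List.mem_append.mp hw with hw | hw
        exacts [hlu w hw, hlq w hw]
      have hlune : lu ≠ [] := by
        intro hh; rw [hh] at hflu; exact hun (by simpa using hflu.symm)
      rw [this, List.head?_append_of_ne_nil _ hlune] at hh'
      exact ⟨lu, hlu, hflu, hh'⟩
  have hS : ∀ i, h i ∈ M' := by
    intro i
    obtain ⟨l, hl, hfl⟩ := exists_fact (mem_hull_self i)
    exact ⟨l, hl, hfl, hcon i l hl hfl⟩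
  have hmem : M' ∈ {M | Stable M ∧ ∀ i, h i ∈ M} := by
    rw [Set.mem_setOf_eq]; exact ⟨hstable, hS⟩
  have hbM' : b ∈ M' := Set.sInter_subset_of_mem hmem hb.1
  obtain ⟨l, hl, hfl, hh⟩ := hbM'
  have : l = [b] := fact_unique hl (by simp [hb]) (by simp [hfl])
  rw [this] at hh
  simp at hh

/-- The base is finite (it injects into the unknowns via heads). -/
theorem base_finite : (base h).Finite := by
  have key : ∀ b : base h, ∃ (i : Fin n) (l : List (List ℕ)),
      (∀ u ∈ l, u ∈ base h) ∧ l.flatten = h i ∧ l.head? = some b.1 :=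
    fun b => exists_head b.2
  choose f lf hlf1 hlf2 hlf3 using key
  have hinj : Function.Injective f := by
    intro b1 b2 hf
    have : lf b1 = lf b2 :=
      fact_unique (hlf1 b1) (hlf1 b2) (by rw [hlf2 b1, hlf2 b2, hf])
    have h2 : (lf b1).head? = some b2.1 := by rw [this]; exact hlf3 b2
    have h3 := (hlf3 b1).symm.trans h2
    exact Subtype.ext (by simpa using h3)
  have : Finite (base h) := Finite.of_injective f hinj
  exact Set.toFinite _

theorem wordPoly_nil : wordPoly [] = 0 := by simp [wordPoly]

theorem wordPoly_cons (a : ℕ) (w : List ℕ) :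
    wordPoly (a :: w) = Polynomial.C (a : ℤ) + Polynomial.X * wordPoly w := by
  unfold wordPoly
  rw [List.length_cons, Finset.sum_range_succ']
  simp only [List.getD_cons_succ, List.getD_cons_zero, pow_zero, mul_one]
  rw [add_comm]
  congr 1
  rw [Finset.mul_sum]
  apply Finset.sum_congr rfl
  intro i _
  rw [pow_succ]
  ring

theorem wordPoly_append (a b : List ℕ) :
    wordPoly (a ++ b) = wordPoly a + Polynomial.X ^ a.length * wordPoly b := by
  induction a with
  | nil => simp [wordPoly_nil]
  | cons x t ih =>
    rw [List.cons_append, wordPoly_cons, wordPoly_cons, ih]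
    simp [List.length_cons, pow_succ]
    ring

theorem wordPoly_coeff (w : List ℕ) (i : ℕ) :
    (wordPoly w).coeff i = if i < w.length then (w.getD i 0 : ℤ) else 0 := by
  unfold wordPoly
  rw [Polynomial.finset_sum_coeff]
  simp only [Polynomial.coeff_C_mul, Polynomial.coeff_X_pow]
  rw [Finset.sum_eq_single i]
  · by_cases hi : i < w.length
    · simp [hi]
    · simp [hi, List.getElem?_eq_none (not_lt.mp hi)]
  · intro b _ hbi
    simp [Ne.symm hbi]
  · intro hi
    simp only [Finset.mem_range, not_lt] at hi
    simp [List.getElem?_eq_none hi, not_lt.mpr hi]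

theorem lenL_nil {n : ℕ} (L : Fin n → ℕ) : lenL L [] = 0 := by simp [lenL]

theorem lenL_cons {n : ℕ} (L : Fin n → ℕ) (y : Fin n) (t : List (Fin n)) :
    lenL L (y :: t) = L y + lenL L t := by simp [lenL]

/-- Expansion of the polynomial of an image. -/
theorem wordPoly_mApply {n : ℕ} (g : Fin n → List ℕ) (L : Fin n → ℕ)
    (hg : ∀ j, (g j).length = L j) (x0 : Fin n) (u : List (Fin n)) :
    wordPoly (mApply g u) =
      ∑ i ∈ Finset.range u.length,
        Polynomial.X ^ lenL L (u.take i) * wordPoly (g (u.getD i x0)) := by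
  induction u with
  | nil => simp [mApply, wordPoly_nil]
  | cons y t ih =>
    have h1 : mApply g (y :: t) = g y ++ mApply g t := by simp [mApply]
    rw [h1, wordPoly_append, hg y, ih, List.length_cons, Finset.sum_range_succ']
    simp only [List.getD_cons_succ, List.getD_cons_zero, List.take_succ_cons, lenL_cons,
      List.take_zero, lenL_nil, pow_zero, one_mul]
    rw [add_comm, Finset.mul_sum]
    congr 1
    apply Finset.sum_congr rfl
    intro i _
    rw [pow_add]
    ring

/-- The key kernel identity: the matrix row applied to the polynomial vector of a
solution vanishes. -/
theorem row_sum_eq {n : ℕ} (g : Fin n → List ℕ) (L : Fin n → ℕ)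
    (hg : ∀ j, (g j).length = L j) (u : List (Fin n)) :
    ∑ j : Fin n, (∑ i ∈ Finset.range u.length,
        if u.getD i j = j then (Polynomial.X : Polynomial ℤ) ^ lenL L (u.take i) else 0)
      * wordPoly (g j) = wordPoly (mApply g u) := by
  classical
  rcases Nat.eq_zero_or_pos n with hn | hn
  · subst hn
    have hu : u = [] := by
      cases u with
      | nil => rfl
      | cons y _ => exact y.elim0
    subst hu
    simp [mApply, wordPoly_nil]
  · have x0 : Fin n := ⟨0, hn⟩
    have step1 : ∀ j : Fin n, (∑ i ∈ Finset.range u.length,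
          if u.getD i j = j then (Polynomial.X : Polynomial ℤ) ^ lenL L (u.take i) else 0)
        * wordPoly (g j)
        = ∑ i ∈ Finset.range u.length,
          (if u.getD i j = j then (Polynomial.X : Polynomial ℤ) ^ lenL L (u.take i) else 0)
            * wordPoly (g j) := fun j => Finset.sum_mul ..
    rw [Finset.sum_congr rfl (fun j _ => step1 j), Finset.sum_comm,
      wordPoly_mApply g L hg x0 u]
    apply Finset.sum_congr rfl
    intro i hi
    rw [Finset.mem_range] at hi
    have hgd : ∀ j : Fin n, u.getD i j = u.getD i x0 := by
      intro j
      rw [List.getD_eq_getElem _ _ hi, List.getD_eq_getElem _ _ hi]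
    simp only [hgd, ite_mul, zero_mul]
    rw [Finset.sum_ite_eq]
    simp

theorem row_zero {n : ℕ} (g : Fin n → List ℕ) (L : Fin n → ℕ)
    (hg : ∀ j, (g j).length = L j) (u v : List (Fin n)) (hs : mApply g u = mApply g v) :
    ∑ j : Fin n, eqPoly u v j L * wordPoly (g j) = 0 := by
  unfold eqPoly
  simp only [sub_mul]
  rw [Finset.sum_sub_distrib, row_sum_eq g L hg u, row_sum_eq g L hg v, hs, sub_self]

/-- Replace every factor of a factorization by a constant block of `1`s (if the factor
is `b`) or `0`s (otherwise). -/
def replb (b : List ℕ) (l : List (List ℕ)) : List ℕ :=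
  (l.map (fun u => List.replicate u.length (if u = b then 1 else 0))).flatten

theorem replb_append (b : List ℕ) (l1 l2 : List (List ℕ)) :
    replb b (l1 ++ l2) = replb b l1 ++ replb b l2 := by simp [replb]

theorem replb_length (b : List ℕ) (l : List (List ℕ)) :
    (replb b l).length = l.flatten.length := by
  simp [replb, List.length_flatten, List.map_map, Function.comp_def]

theorem replb_getD0 (b u0 : List ℕ) (hu : u0 ≠ []) (rest : List (List ℕ)) :
    (replb b (u0 :: rest)).getD 0 0 = if u0 = b then 1 else 0 := by
  cases u0 with
  | nil => exact absurd rfl hu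
  | cons x t => simp [replb, List.replicate_succ]

theorem mApply_replb {n : ℕ} (fct : Fin n → List (List ℕ)) (b : List ℕ)
    (w : List (Fin n)) :
    mApply (fun j => replb b (fct j)) w = replb b ((w.map fct).flatten) := by
  induction w with
  | nil => rfl
  | cons y t ih =>
    have h1 : mApply (fun j => replb b (fct j)) (y :: t)
        = replb b (fct y) ++ mApply (fun j => replb b (fct j)) t := by simp [mApply]
    rw [h1, ih, List.map_cons, List.flatten_cons, replb_append]

theorem flatten_cfact {n : ℕ} (fct : Fin n → List (List ℕ)) (h : Fin n → List ℕ)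
    (hf : ∀ j, (fct j).flatten = h j) (w : List (Fin n)) :
    ((w.map fct).flatten).flatten = mApply h w := by
  rw [List.flatten_flatten]
  simp [mApply, List.map_map, Function.comp_def, hf]


set_option synthInstance.maxHeartbeats 1000000 in
set_option maxHeartbeats 2000000 in
/-- If a system of word equations on `n` unknowns has a common solution of rank `r` and
length type `L`, then the `m × n` matrix of the polynomials `Q_{Eᵢ,xⱼ,L}`, viewed over the
field `ℚ(X)`, has rank at most `n − r`. -/
theorem matrix_rank_le {n m : ℕ}
    (A : Finset ℕ) (hA : ∀ a ∈ A, 0 < a)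
    (eqs : Fin m → List (Fin n) × List (Fin n))
    (L : Fin n → ℕ)
    (h : Fin n → List ℕ) (hh : IntoAlph A h)
    (hsol : ∀ i, mApply h (eqs i).1 = mApply h (eqs i).2)
    (r : ℕ) (hr : mRank h = r)
    (hL : ∀ j, (h j).length = L j) :
    Matrix.rank (Matrix.of fun (i : Fin m) (j : Fin n) =>
      toRF (eqPoly (eqs i).1 (eqs i).2 j L)) ≤ n - r := by

  classical
  -- choose factorizations of the images over the base of the free hull
  have hfact : ∀ j : Fin n, ∃ l : List (List ℕ), (∀ u ∈ l, u ∈ base h) ∧ l.flatten = h j :=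
    fun j => exists_fact (mem_hull_self j)
  choose fct hfct1 hfct2 using hfact
  have hBfin := (base_finite (h := h))
  set Bfin : Finset (List ℕ) := hBfin.toFinset with hBdef
  -- the rank is at most the cardinality of the base
  have hrB : r ≤ Bfin.card := by
    rw [← hr]
    apply Nat.sInf_le
    exact ⟨Bfin, rfl, fun i =>
      ⟨fct i, fun u hu => hBfin.mem_toFinset.mpr (hfct1 i u hu), hfct2 i⟩⟩
  -- the indicator solutions
  set gw : List ℕ → Fin n → List ℕ := fun b j => replb b (fct j) with hgwdef
  have hgwlen : ∀ b j, (gw b j).length = L j := by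
    intro b j
    show (replb b (fct j)).length = L j
    rw [replb_length, hfct2 j, hL j]
  have hgwsol : ∀ b (i : Fin m), mApply (gw b) (eqs i).1 = mApply (gw b) (eqs i).2 := by
    intro b i
    have hmem : ∀ w : List (Fin n), ∀ u ∈ (w.map fct).flatten, u ∈ base h := by
      intro w u hu
      obtain ⟨lj, hlj, hulj⟩ := List.mem_flatten.mp hu
      obtain ⟨j, _, rfl⟩ := List.mem_map.mp hlj
      exact hfct1 j u hulj
    have key : ∀ w : List (Fin n), mApply (gw b) w = replb b ((w.map fct).flatten) :=
      fun w => mApply_replb fct b w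
    rw [key, key]
    congr 1
    apply fact_unique (hmem _) (hmem _)
    rw [flatten_cfact fct h hfct2, flatten_cfact fct h hfct2, hsol i]
  -- the embedding as a ring hom
  set φ : Polynomial ℤ →+* RatFunc ℚ :=
    ((algebraMap (Polynomial ℚ) (RatFunc ℚ)).comp (Polynomial.mapRingHom (Int.castRingHom ℚ)))
    with hφdef
  set M : Matrix (Fin m) (Fin n) (RatFunc ℚ) :=
    Matrix.of fun (i : Fin m) (j : Fin n) => toRF (eqPoly (eqs i).1 (eqs i).2 j L) with hM
  set W : List ℕ → (Fin n → RatFunc ℚ) := fun b j => toRF (wordPoly (gw b j)) with hW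
  -- the kernel property
  have hker : ∀ b, M.mulVec (W b) = 0 := by
    intro b
    funext i
    have h1 : M.mulVec (W b) i = ∑ j : Fin n, M i j * W b j := by
      simp [Matrix.mulVec, dotProduct]
    have h2 : ∀ j : Fin n, M i j * W b j
        = φ (eqPoly (eqs i).1 (eqs i).2 j L * wordPoly (gw b j)) := by
      intro j
      rw [map_mul]
      rfl
    rw [h1, Finset.sum_congr rfl fun j _ => h2 j, ← map_sum,
      row_zero (gw b) L (hgwlen b) _ _ (hgwsol b i), map_zero]
    rfl
  -- linear independence of the kernel vectors
  have hWli : LinearIndependent (RatFunc ℚ) (fun b : ↥Bfin => W b.1) := by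
    rw [← LinearIndependent.iff_fractionRing (Polynomial ℚ) (RatFunc ℚ)]
    rw [linearIndependent_iff']
    intro s g hsum b0 hb0
    by_contra hg0
    set s' := s.filter (fun b => g b ≠ 0) with hs'
    have hb0' : b0 ∈ s' := Finset.mem_filter.mpr ⟨hb0, hg0⟩
    obtain ⟨bm, hbm, hbmmin⟩ :=
      Finset.exists_min_image s' (fun b => (g b).natTrailingDegree) ⟨b0, hb0'⟩
    have hgbm : g bm ≠ 0 := (Finset.mem_filter.mp hbm).2
    set t := (g bm).natTrailingDegree with ht
    have hbmbase : (bm : List ℕ) ∈ base h := hBfin.mem_toFinset.mp bm.2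
    obtain ⟨j0, l0, hl0b, hl0f, hl0h⟩ := exists_head hbmbase
    have hfcteq : fct j0 = l0 := fact_unique (hfct1 j0) hl0b (by rw [hfct2 j0, hl0f])
    obtain ⟨l0t, hl0t⟩ := List.head?_eq_some_iff.mp hl0h
    have hbm_ne : (bm : List ℕ) ≠ [] := hbmbase.2.1
    have hget : ∀ b : List ℕ, (gw b j0).getD 0 0 = if (bm : List ℕ) = b then 1 else 0 := by
      intro b
      show (replb b (fct j0)).getD 0 0 = _
      rw [hfcteq, hl0t]
      exact replb_getD0 b (bm : List ℕ) hbm_ne l0t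
    have hlen0 : ∀ b : List ℕ, 0 < (gw b j0).length := by
      intro b
      rw [hgwlen b j0, ← hL j0, ← hfct2 j0, hfcteq, hl0t]
      have : 0 < (bm : List ℕ).length := List.length_pos_iff.mpr hbm_ne
      simp only [List.flatten_cons, List.length_append]
      omega
    have hj0 := congrFun hsum j0
    simp only [Finset.sum_apply, Pi.smul_apply, Pi.zero_apply] at hj0
    have hterm : ∀ b : ↥Bfin, g b • (W b.1 j0)
        = algebraMap (Polynomial ℚ) (RatFunc ℚ)
            (g b * ((wordPoly (gw b.1 j0)).map (Int.castRingHom ℚ))) := by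
      intro b
      rw [map_mul, Algebra.smul_def]
      rfl
    rw [Finset.sum_congr rfl (fun b _ => hterm b), ← map_sum] at hj0
    have hpoly : ∑ b ∈ s, g b * ((wordPoly (gw b.1 j0)).map (Int.castRingHom ℚ)) = 0 :=
      IsFractionRing.injective (Polynomial ℚ) (RatFunc ℚ) (by rw [map_zero]; exact hj0)
    have hcoeff := congrArg (fun p => Polynomial.coeff p t) hpoly
    simp only [Polynomial.finset_sum_coeff, Polynomial.coeff_zero] at hcoeff
    have hterm2 : ∀ b ∈ s, ((g b) * ((wordPoly (gw b.1 j0)).map (Int.castRingHom ℚ))).coeff t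
        = if b = bm then (g bm).coeff t else 0 := by
      intro b hb
      by_cases hgb : g b = 0
      · have hbne : b ≠ bm := by rintro rfl; exact hgbm hgb
        simp [hgb, hbne]
      · have hbs' : b ∈ s' := Finset.mem_filter.mpr ⟨hb, hgb⟩
        have htle : t ≤ (g b).natTrailingDegree := hbmmin b hbs'
        rw [Polynomial.coeff_mul, Finset.sum_eq_single (t, 0)]
        · have hc0 : ((wordPoly (gw b.1 j0)).map (Int.castRingHom ℚ)).coeff 0
              = (if (bm : List ℕ) = b.1 then 1 else 0 : ℚ) := by
            rw [Polynomial.coeff_map, wordPoly_coeff, if_pos (hlen0 b.1), hget b.1]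
            by_cases hc : (bm : List ℕ) = b.1 <;> simp [hc]
          rw [hc0]
          by_cases hbbm : b = bm
          · rw [hbbm, if_pos rfl, if_pos rfl, mul_one]
          · have hne : (bm : List ℕ) ≠ b.1 := fun hh => hbbm (Subtype.ext hh.symm)
            rw [if_neg hne, if_neg hbbm, mul_zero]
        · rintro ⟨x1, x2⟩ hxmem hxne
          rw [Finset.HasAntidiagonal.mem_antidiagonal] at hxmem
          have hx2 : x2 ≠ 0 := by
            rintro rfl
            exact hxne (by simp at hxmem ⊢; omega)
          have hx1 : x1 < t := by omega
          rw [Polynomial.coeff_eq_zero_of_lt_natTrailingDegree (lt_of_lt_of_le hx1 htle),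
            zero_mul]
        · intro hnot
          exact absurd (Finset.HasAntidiagonal.mem_antidiagonal.mpr (by simp)) hnot
    rw [Finset.sum_congr rfl hterm2, Finset.sum_ite_eq' s bm (fun _ => (g bm).coeff t),
      if_pos (Finset.mem_filter.mp hbm).1] at hcoeff
    exact hgbm (Polynomial.trailingCoeff_eq_zero.mp (by rw [Polynomial.trailingCoeff]; exact hcoeff))
  -- the rank bound
  have hspan : Submodule.span (RatFunc ℚ) (Set.range (fun b : ↥Bfin => W b.1))
      ≤ LinearMap.ker M.mulVecLin := by
    rw [Submodule.span_le]
    rintro x ⟨b, rfl⟩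
    exact LinearMap.mem_ker.mpr ((M.mulVecLin_apply _).trans (hker b.1))
  have hcard : Module.finrank (RatFunc ℚ) (Submodule.span (RatFunc ℚ)
      (Set.range (fun b : ↥Bfin => W b.1))) = Bfin.card := by
    rw [finrank_span_eq_card hWli, Fintype.card_coe]
  have hdimker : Bfin.card ≤ Module.finrank (RatFunc ℚ) (LinearMap.ker M.mulVecLin) := by
    rw [← hcard]
    exact Submodule.finrank_mono hspan
  have hrankker := LinearMap.finrank_range_add_finrank_ker M.mulVecLin
  rw [Module.finrank_pi, Fintype.card_fin] at hrankker
  have hrankdef : M.rank = Module.finrank (RatFunc ℚ) (LinearMap.range M.mulVecLin) := rfl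
  omega
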